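/- Hamilton-Pontryagin principle for vakonomic Lagrangians: let 𝔏 : ℝ^n × ℝ^n × ℝ^m → ℝ be continuously differentiable and let (q,v,p,λ) : [t₁,t₂] → ℝ^n × ℝ^n × ℝ^n × ℝ^m be a continuously differentiable curve with t₁ < t₂. Then the following are equivalent: (i) for all t ∈ [t₁,t₂], p(t) = ∂𝔏/∂v(q(t),v(t),λ(t)), q'(t) = v(t), p'(t) = ∂𝔏/∂q(q(t),v(t),λ(t)), and ∂𝔏/∂λ(q(t),v(t),λ(t)) = 0; (ii) for every continuously differentiable variation (δq,δv,δp,δλ) : [t₁,t₂] → ℝ^n × ℝ^n × ℝ^n × ℝ^m with δq(t₁) = δq(t₂) = 0, the function s ↦ ∫_{t₁}^{t₂} [ 𝔏(q(t)+s δq(t), v(t)+s δv(t), λ(t)+s δλ(t)) + (p(t)+s δp(t))·(q'(t)+s δq'(t) − v(t) − s δv(t)) ] dt has derivative zero at s = 0. -/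

import Mathlib

open scoped BigOperators

/-- The dot product on `ℝ^k`. -/
def dot {k : ℕ} (x y : Fin k → ℝ) : ℝ := ∑ i, x i * y i

open Set MeasureTheory Metric


lemma dot_zero_right {k : ℕ} (x : Fin k → ℝ) : dot x 0 = 0 := by simp [dot]
lemma dot_zero_left {k : ℕ} (x : Fin k → ℝ) : dot 0 x = 0 := by simp [dot]
lemma dot_comm {k : ℕ} (x y : Fin k → ℝ) : dot x y = dot y x := by
  simp [dot, mul_comm]
lemma dot_single {k : ℕ} (x : Fin k → ℝ) (i : Fin k) : dot x (Pi.single i 1) = x i := by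
  simp [dot, Pi.single_apply]
lemma dot_sub_left {k : ℕ} (x y z : Fin k → ℝ) : dot (x - y) z = dot x z - dot y z := by
  simp [dot, sub_mul, Finset.sum_sub_distrib]
lemma dot_neg_right {k : ℕ} (x y : Fin k → ℝ) : dot x (-y) = - dot x y := by
  simp [dot, Finset.sum_neg_distrib]

lemma Continuous.dot' {α : Type*} [TopologicalSpace α] {k : ℕ} {f g : α → Fin k → ℝ}
    (hf : Continuous f) (hg : Continuous g) : Continuous fun a => dot (f a) (g a) := by
  unfold dot
  exact continuous_finset_sum _ fun i _ =>
    ((continuous_apply i).comp hf).mul ((continuous_apply i).comp hg)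

lemma HasDerivAt.index {k : ℕ} {f : ℝ → Fin k → ℝ} {f' : Fin k → ℝ} {s : ℝ}
    (h : HasDerivAt f f' s) (i : Fin k) : HasDerivAt (fun t => f t i) (f' i) s :=
  (ContinuousLinearMap.proj (R := ℝ) (φ := fun _ : Fin k => ℝ) i).hasFDerivAt.comp_hasDerivAt s h

lemma HasDerivAt.dot {k : ℕ} {f g : ℝ → Fin k → ℝ} {f' g' : Fin k → ℝ} {s : ℝ}
    (hf : HasDerivAt f f' s) (hg : HasDerivAt g g' s) :
    HasDerivAt (fun t => dot (f t) (g t)) (dot f' (g s) + dot (f s) g') s := by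
  have h : ∀ i ∈ Finset.univ, HasDerivAt (fun t => f t i * g t i)
      (f' i * g s i + f s i * g' i) s := fun i _ => (hf.index i).mul (hg.index i)
  have h' := HasDerivAt.fun_sum h
  rw [Finset.sum_add_distrib] at h'
  unfold _root_.dot
  exact h'



lemma flcv_scalar_aux {t₁ t₂ : ℝ} (ht : t₁ < t₂) {g : ℝ → ℝ} (hg : Continuous g)
    (h : ∀ ψ : ℝ → ℝ, ContDiff ℝ 1 ψ → ψ t₁ = 0 → ψ t₂ = 0 →
      (∫ t in t₁..t₂, g t * ψ t) = 0)
    {t₀ : ℝ} (ht₀ : t₀ ∈ Ioo t₁ t₂) (hpos : 0 < g t₀) : False := by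
  -- find δ > 0 with ball t₀ δ ⊆ Ioo t₁ t₂ and g > g t₀ / 2 on the ball
  have hU : IsOpen ({t | g t₀ / 2 < g t} ∩ Ioo t₁ t₂) :=
    (isOpen_lt continuous_const hg).inter isOpen_Ioo
  have ht₀U : t₀ ∈ ({t | g t₀ / 2 < g t} ∩ Ioo t₁ t₂) := ⟨by simp; linarith, ht₀⟩
  obtain ⟨δ, hδ, hball⟩ := Metric.isOpen_iff.1 hU t₀ ht₀U
  -- bump function
  let B : ContDiffBump t₀ := ⟨δ/2, δ, by positivity, by linarith⟩
  have hψ : ContDiff ℝ 1 (B : ℝ → ℝ) := by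
    have := B.contDiff (n := (⊤ : ℕ∞))
    exact this.of_le (by exact_mod_cast le_top)
  have hmem : ∀ x : ℝ, x ∈ ball t₀ δ → g (t₀) / 2 < g x ∧ x ∈ Ioo t₁ t₂ := fun x hx => hball hx
  have hzero : ∀ x : ℝ, x ∉ Ioo (t₀ - δ) (t₀ + δ) → (B : ℝ → ℝ) x = 0 := by
    intro x hx
    refine B.zero_of_le_dist ?_
    simp only [Real.dist_eq]
    show δ ≤ |x - t₀|
    by_contra hc
    push_neg at hc
    have h' := abs_lt.1 hc
    exact hx ⟨by linarith [h'.1], by linarith [h'.2]⟩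
  have hsub1 : t₁ ≤ t₀ - δ := by
    by_contra hc
    push_neg at hc
    have : t₁ ∈ ball t₀ δ := by
      simp only [mem_ball, Real.dist_eq, abs_lt]
      constructor <;> [linarith [ht₀.1]; linarith [ht₀.1]]
    exact lt_irrefl t₁ (hmem t₁ this).2.1
  have hsub2 : t₀ + δ ≤ t₂ := by
    by_contra hc
    push_neg at hc
    have : t₂ ∈ ball t₀ δ := by
      simp only [mem_ball, Real.dist_eq, abs_lt]
      constructor <;> [linarith [ht₀.2]; linarith [ht₀.2]]
    exact lt_irrefl t₂ (hmem t₂ this).2.2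
  have hgψcont : Continuous fun t => g t * (B : ℝ → ℝ) t := hg.mul hψ.continuous
  have hint : ∀ a b : ℝ, IntervalIntegrable (fun t => g t * (B : ℝ → ℝ) t) volume a b :=
    fun a b => hgψcont.intervalIntegrable a b
  have hB1 : (B : ℝ → ℝ) t₁ = 0 := hzero t₁ (by simp; intro h'; linarith)
  have hB2 : (B : ℝ → ℝ) t₂ = 0 := hzero t₂ (by simp; intro h'; linarith)
  have htot : (∫ t in t₁..t₂, g t * (B : ℝ → ℝ) t) = 0 := h _ hψ hB1 hB2
  -- split
  have hsplit : (∫ t in t₁..(t₀ - δ), g t * (B : ℝ → ℝ) t)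
      + (∫ t in (t₀ - δ)..(t₀ + δ), g t * (B : ℝ → ℝ) t)
      + (∫ t in (t₀ + δ)..t₂, g t * (B : ℝ → ℝ) t)
      = ∫ t in t₁..t₂, g t * (B : ℝ → ℝ) t := by
    rw [intervalIntegral.integral_add_adjacent_intervals (hint _ _) (hint _ _),
      intervalIntegral.integral_add_adjacent_intervals (hint _ _) (hint _ _)]
  have hleft : (∫ t in t₁..(t₀ - δ), g t * (B : ℝ → ℝ) t) = 0 := by
    rw [intervalIntegral.integral_congr (g := fun _ => (0:ℝ)) ?_, intervalIntegral.integral_zero]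
    intro x hx
    rw [uIcc_of_le hsub1] at hx
    have : (B : ℝ → ℝ) x = 0 := hzero x (by simp; intro h'; linarith [hx.2])
    simp [this]
  have hright : (∫ t in (t₀ + δ)..t₂, g t * (B : ℝ → ℝ) t) = 0 := by
    rw [intervalIntegral.integral_congr (g := fun _ => (0:ℝ)) ?_, intervalIntegral.integral_zero]
    intro x hx
    rw [uIcc_of_le hsub2] at hx
    have : (B : ℝ → ℝ) x = 0 := hzero x (by simp; intro h'; linarith [hx.1])
    simp [this]
  have hmid : 0 < ∫ t in (t₀ - δ)..(t₀ + δ), g t * (B : ℝ → ℝ) t := by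
    refine intervalIntegral.intervalIntegral_pos_of_pos_on (hint _ _) ?_ (by linarith)
    intro x hx
    have hxball : x ∈ ball t₀ δ := by
      simp only [mem_ball, Real.dist_eq, abs_lt]
      constructor <;> [linarith [hx.1]; linarith [hx.2]]
    have h1 : 0 < g x := lt_trans (by linarith) (hmem x hxball).1
    have h2 : 0 < (B : ℝ → ℝ) x := B.pos_of_mem_ball hxball
    positivity
  linarith [hsplit, htot, hleft, hright, hmid]

lemma flcv_scalar {t₁ t₂ : ℝ} (ht : t₁ < t₂) {g : ℝ → ℝ} (hg : Continuous g)
    (h : ∀ ψ : ℝ → ℝ, ContDiff ℝ 1 ψ → ψ t₁ = 0 → ψ t₂ = 0 →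
      (∫ t in t₁..t₂, g t * ψ t) = 0) :
    ∀ t ∈ Icc t₁ t₂, g t = 0 := by
  have hIoo : ∀ t ∈ Ioo t₁ t₂, g t = 0 := by
    intro t₀ ht₀
    by_contra hne
    rcases lt_or_gt_of_ne hne with hneg | hpos
    · refine flcv_scalar_aux ht (g := fun t => -g t) hg.neg ?_ ht₀ (by simpa using hneg)
      intro ψ hψ h1 h2
      have hthis := h ψ hψ h1 h2
      have h2' : (∫ t in t₁..t₂, -(g t * ψ t)) = 0 := by
        rw [intervalIntegral.integral_neg, hthis, neg_zero]
      simpa [neg_mul] using h2'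
    · exact flcv_scalar_aux ht hg h ht₀ hpos
  intro t htI
  have hclosed : IsClosed {t | g t = 0} := isClosed_eq hg continuous_const
  have : Icc t₁ t₂ ⊆ {t | g t = 0} := by
    rw [← closure_Ioo ht.ne]
    exact closure_minimal hIoo hclosed
  exact this htI

lemma action_hasDerivAt {n m : ℕ}
    (𝔏 : (Fin n → ℝ) × (Fin n → ℝ) × (Fin m → ℝ) → ℝ)
    (h𝔏 : ContDiff ℝ 1 𝔏) (t₁ t₂ : ℝ)
    (q v p : ℝ → Fin n → ℝ) (l : ℝ → Fin m → ℝ)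
    (hq : ContDiff ℝ 1 q) (hv : ContDiff ℝ 1 v) (hp : ContDiff ℝ 1 p) (hl : ContDiff ℝ 1 l)
    (δq δv δp : ℝ → Fin n → ℝ) (δl : ℝ → Fin m → ℝ)
    (hδq : ContDiff ℝ 1 δq) (hδv : ContDiff ℝ 1 δv) (hδp : ContDiff ℝ 1 δp)
    (hδl : ContDiff ℝ 1 δl) :
    HasDerivAt (fun s : ℝ => ∫ t in t₁..t₂,
        (𝔏 (q t + s • δq t, v t + s • δv t, l t + s • δl t) +
          dot (p t + s • δp t) (deriv q t + s • deriv δq t - v t - s • δv t)))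
      (∫ t in t₁..t₂,
        ((fderiv ℝ 𝔏 (q t, v t, l t)) (δq t, δv t, δl t) +
          (dot (δp t) (deriv q t - v t) + dot (p t) (deriv δq t - δv t)))) 0 := by
  set F : ℝ → ℝ → ℝ := fun s t =>
    𝔏 (q t + s • δq t, v t + s • δv t, l t + s • δl t) +
      dot (p t + s • δp t) (deriv q t + s • deriv δq t - v t - s • δv t) with hF
  set F' : ℝ → ℝ → ℝ := fun s t =>
    (fderiv ℝ 𝔏 (q t + s • δq t, v t + s • δv t, l t + s • δl t)) (δq t, δv t, δl t) +
      (dot (δp t) (deriv q t + s • deriv δq t - v t - s • δv t) +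
        dot (p t + s • δp t) (deriv δq t - δv t)) with hF'
  have cq := hq.continuous; have cv := hv.continuous; have cp := hp.continuous
  have cl := hl.continuous
  have cδq := hδq.continuous; have cδv := hδv.continuous; have cδp := hδp.continuous
  have cδl := hδl.continuous
  have cdq := hq.continuous_deriv le_rfl
  have cdδq := hδq.continuous_deriv le_rfl
  -- continuity of F s in t, for each s
  have hXc : ∀ s : ℝ, Continuous fun t =>
      (q t + s • δq t, v t + s • δv t, l t + s • δl t) := fun s =>
    ((cq.add (cδq.const_smul s)).prodMk
      (((cv.add (cδv.const_smul s))).prodMk (cl.add (cδl.const_smul s))))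
  have hCc : ∀ s : ℝ, Continuous fun t =>
      deriv q t + s • deriv δq t - v t - s • δv t := fun s =>
    (((cdq.add (cdδq.const_smul s)).sub cv).sub (cδv.const_smul s))
  have hFc : ∀ s : ℝ, Continuous (F s) := fun s =>
    (h𝔏.continuous.comp (hXc s)).add ((cp.add (cδp.const_smul s)).dot' (hCc s))
  -- joint continuity of F'
  have hXj : Continuous fun st : ℝ × ℝ =>
      (q st.2 + st.1 • δq st.2, v st.2 + st.1 • δv st.2, l st.2 + st.1 • δl st.2) := by
    refine Continuous.prodMk ?_ (Continuous.prodMk ?_ ?_)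
    · exact (cq.comp continuous_snd).add (continuous_fst.smul (cδq.comp continuous_snd))
    · exact (cv.comp continuous_snd).add (continuous_fst.smul (cδv.comp continuous_snd))
    · exact (cl.comp continuous_snd).add (continuous_fst.smul (cδl.comp continuous_snd))
  have hF'j : Continuous fun st : ℝ × ℝ => F' st.1 st.2 := by
    refine Continuous.add ?_ (Continuous.add ?_ ?_)
    · exact ((h𝔏.continuous_fderiv one_ne_zero).comp hXj).clm_apply
        (((cδq.comp continuous_snd).prodMk
          ((cδv.comp continuous_snd).prodMk (cδl.comp continuous_snd))))
    · exact (cδp.comp continuous_snd).dot'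
        ((((cdq.comp continuous_snd).add
          (continuous_fst.smul (cdδq.comp continuous_snd))).sub
            (cv.comp continuous_snd)).sub (continuous_fst.smul (cδv.comp continuous_snd)))
    · exact ((cp.comp continuous_snd).add
        (continuous_fst.smul (cδp.comp continuous_snd))).dot'
          ((cdδq.comp continuous_snd).sub (cδv.comp continuous_snd))
  -- pointwise derivative in s
  have hderiv : ∀ (t s : ℝ), HasDerivAt (fun s => F s t) (F' s t) s := by
    intro t s
    have h1 : HasDerivAt (fun s : ℝ => q t + s • δq t) (δq t) s := by
      simpa using ((hasDerivAt_id s).smul_const (δq t)).const_add (q t)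
    have h2 : HasDerivAt (fun s : ℝ => v t + s • δv t) (δv t) s := by
      simpa using ((hasDerivAt_id s).smul_const (δv t)).const_add (v t)
    have h3 : HasDerivAt (fun s : ℝ => l t + s • δl t) (δl t) s := by
      simpa using ((hasDerivAt_id s).smul_const (δl t)).const_add (l t)
    have hX : HasDerivAt (fun s : ℝ =>
        (q t + s • δq t, v t + s • δv t, l t + s • δl t))
        (δq t, δv t, δl t) s := h1.prodMk (h2.prodMk h3)
    have hL : HasDerivAt (fun s : ℝ => 𝔏 (q t + s • δq t, v t + s • δv t, l t + s • δl t))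
        ((fderiv ℝ 𝔏 (q t + s • δq t, v t + s • δv t, l t + s • δl t)) (δq t, δv t, δl t)) s :=
      HasFDerivAt.comp_hasDerivAt s
        ((h𝔏.differentiable one_ne_zero _).hasFDerivAt) hX
    have hA : HasDerivAt (fun s : ℝ => p t + s • δp t) (δp t) s := by
      simpa using ((hasDerivAt_id s).smul_const (δp t)).const_add (p t)
    have hC1 : HasDerivAt (fun s : ℝ => deriv q t + s • deriv δq t) (deriv δq t) s := by
      simpa using ((hasDerivAt_id s).smul_const (deriv δq t)).const_add (deriv q t)
    have hC2 : HasDerivAt (fun s : ℝ => s • δv t) (δv t) s := by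
      simpa using (hasDerivAt_id s).smul_const (δv t)
    have hC : HasDerivAt (fun s : ℝ => deriv q t + s • deriv δq t - v t - s • δv t)
        (deriv δq t - δv t) s := (hC1.sub_const (v t)).sub hC2
    exact hL.add (hA.dot hC)
  -- bound on [-1,1] × uIcc
  have hK : IsCompact ((Icc (-1:ℝ) 1) ×ˢ uIcc t₁ t₂) := isCompact_Icc.prod isCompact_uIcc
  obtain ⟨M, hM⟩ := hK.exists_bound_of_continuousOn hF'j.continuousOn
  have main := intervalIntegral.hasDerivAt_integral_of_dominated_loc_of_deriv_le
    (F := F) (F' := F') (x₀ := (0:ℝ)) (a := t₁) (b := t₂) (μ := volume)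
    (bound := fun _ => M) (s := ball (0:ℝ) 1) (ball_mem_nhds _ one_pos)
    (Filter.Eventually.of_forall fun s => ((hFc s).aestronglyMeasurable).restrict)
    ((hFc 0).intervalIntegrable t₁ t₂)
    (((hF'j.comp (Continuous.prodMk_right (0:ℝ))).aestronglyMeasurable).restrict)
    (ae_of_all _ fun t ht s hs => by
      have : (s, t) ∈ (Icc (-1:ℝ) 1) ×ˢ uIcc t₁ t₂ := by
        refine ⟨?_, uIoc_subset_uIcc ht⟩
        have := mem_ball.1 hs
        rw [Real.dist_eq, sub_zero] at this
        exact abs_le.1 this.le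
      exact hM (s, t) this)
    (intervalIntegrable_const)
    (ae_of_all _ fun t ht s hs => hderiv t s)
  have hfinal := main.2
  -- identify the value of F' at 0
  have h0 : (fun t => F' 0 t) = fun t =>
      ((fderiv ℝ 𝔏 (q t, v t, l t)) (δq t, δv t, δl t) +
        (dot (δp t) (deriv q t - v t) + dot (p t) (deriv δq t - δv t))) := by
    funext t
    simp [hF']
  rw [show (∫ t in t₁..t₂, F' 0 t) = ∫ t in t₁..t₂,
      ((fderiv ℝ 𝔏 (q t, v t, l t)) (δq t, δv t, δl t) +
        (dot (δp t) (deriv q t - v t) + dot (p t) (deriv δq t - δv t))) from by rw [h0]]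
    at hfinal
  exact hfinal

lemma flcv {k : ℕ} {t₁ t₂ : ℝ} (ht : t₁ < t₂) {h : ℝ → Fin k → ℝ} (hh : Continuous h)
    (hint : ∀ φ : ℝ → Fin k → ℝ, ContDiff ℝ 1 φ → φ t₁ = 0 → φ t₂ = 0 →
      (∫ t in t₁..t₂, dot (h t) (φ t)) = 0) :
    ∀ t ∈ Icc t₁ t₂, h t = 0 := by
  intro t htI
  funext i
  show h t i = (0 : Fin k → ℝ) i
  rw [Pi.zero_apply]
  refine flcv_scalar ht (continuous_pi_iff.1 hh i) ?_ t htI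
  intro ψ hψ h1 h2
  have hφ : ContDiff ℝ 1 (fun t (j : Fin k) => if j = i then ψ t else 0) := by
    apply contDiff_pi.2
    intro j
    by_cases hji : j = i
    · simpa [hji] using hψ
    · simpa [hji] using (contDiff_const (c := (0:ℝ)))
  have h0 := hint _ hφ (by funext j; simp [h1]) (by funext j; simp [h2])
  have hdot : ∀ s : ℝ, dot (h s) (fun j => if j = i then ψ s else 0) = h s i * ψ s := by
    intro s
    simp [dot, mul_ite, Finset.sum_ite_eq']
  rw [intervalIntegral.integral_congr (g := fun s => dot (h s) (fun j => if j = i then ψ s else 0))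
    (fun s _ => (hdot s).symm)]
  exact h0


/-- the Hamilton-Pontryagin principle for a vakonomic Lagrangian
`𝔏(q,v,λ)`.  A `C¹` curve `(q,v,p,λ)` satisfies the implicit vakonomic
Euler-Lagrange equations on `[t₁,t₂]` iff the Hamilton-Pontryagin action is
stationary at `s = 0` for every `C¹` variation `(δq,δv,δp,δλ)` with
`δq(t₁) = δq(t₂) = 0`.  Here `Gq, Gv, Gl` are the vectors representing the
partial Fréchet derivatives `∂𝔏/∂q, ∂𝔏/∂v, ∂𝔏/∂λ`. -/
theorem hamilton_pontryagin_vakonomic {n m : ℕ}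
    (𝔏 : (Fin n → ℝ) × (Fin n → ℝ) × (Fin m → ℝ) → ℝ)
    (Gq Gv : (Fin n → ℝ) × (Fin n → ℝ) × (Fin m → ℝ) → Fin n → ℝ)
    (Gl : (Fin n → ℝ) × (Fin n → ℝ) × (Fin m → ℝ) → Fin m → ℝ)
    (h𝔏 : ContDiff ℝ 1 𝔏)
    (hG : ∀ x : (Fin n → ℝ) × (Fin n → ℝ) × (Fin m → ℝ),
      ∃ f : ((Fin n → ℝ) × (Fin n → ℝ) × (Fin m → ℝ)) →L[ℝ] ℝ,
        HasFDerivAt 𝔏 f x ∧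
        ∀ y : (Fin n → ℝ) × (Fin n → ℝ) × (Fin m → ℝ),
          f y = dot (Gq x) y.1 + dot (Gv x) y.2.1 + dot (Gl x) y.2.2)
    (t₁ t₂ : ℝ) (ht : t₁ < t₂)
    (q v p : ℝ → Fin n → ℝ) (l : ℝ → Fin m → ℝ)
    (hq : ContDiff ℝ 1 q) (hv : ContDiff ℝ 1 v) (hp : ContDiff ℝ 1 p)
    (hl : ContDiff ℝ 1 l) :
    (∀ t ∈ Set.Icc t₁ t₂,
        p t = Gv (q t, v t, l t) ∧
        deriv q t = v t ∧
        deriv p t = Gq (q t, v t, l t) ∧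
        Gl (q t, v t, l t) = 0)
    ↔
    (∀ (δq δv δp : ℝ → Fin n → ℝ) (δl : ℝ → Fin m → ℝ),
      ContDiff ℝ 1 δq → ContDiff ℝ 1 δv → ContDiff ℝ 1 δp → ContDiff ℝ 1 δl →
      δq t₁ = 0 → δq t₂ = 0 →
      HasDerivAt (fun s : ℝ => ∫ t in t₁..t₂,
        (𝔏 (q t + s • δq t, v t + s • δv t, l t + s • δl t) +
          dot (p t + s • δp t)
            (deriv q t + s • deriv δq t - v t - s • δv t)))
        0 0) := by
  -- representation of the Fréchet derivative
  have hfd : ∀ (x : (Fin n → ℝ) × (Fin n → ℝ) × (Fin m → ℝ))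
      (y : (Fin n → ℝ) × (Fin n → ℝ) × (Fin m → ℝ)),
      (fderiv ℝ 𝔏 x) y = dot (Gq x) y.1 + dot (Gv x) y.2.1 + dot (Gl x) y.2.2 := by
    intro x y
    obtain ⟨f, hf, hfy⟩ := hG x
    rw [hf.fderiv]
    exact hfy y
  constructor
  · -- EL equations imply stationarity
    intro hEL δq δv δp δl hδq hδv hδp hδl hb1 hb2
    have key := action_hasDerivAt 𝔏 h𝔏 t₁ t₂ q v p l hq hv hp hl δq δv δp δl hδq hδv hδp hδl
    have hψ : ∀ t : ℝ, HasDerivAt (fun t => dot (p t) (δq t))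
        (dot (deriv p t) (δq t) + dot (p t) (deriv δq t)) t := fun t =>
      ((hp.differentiable one_ne_zero t).hasDerivAt).dot ((hδq.differentiable one_ne_zero t).hasDerivAt)
    have hz : (∫ t in t₁..t₂,
        ((fderiv ℝ 𝔏 (q t, v t, l t)) (δq t, δv t, δl t) +
          (dot (δp t) (deriv q t - v t) + dot (p t) (deriv δq t - δv t)))) = 0 := by
      have heq : EqOn
          (fun t => (fderiv ℝ 𝔏 (q t, v t, l t)) (δq t, δv t, δl t) +
            (dot (δp t) (deriv q t - v t) + dot (p t) (deriv δq t - δv t)))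
          (fun t => dot (deriv p t) (δq t) + dot (p t) (deriv δq t)) (uIcc t₁ t₂) := by
        intro t htm
        rw [uIcc_of_le ht.le] at htm
        obtain ⟨h1, h2, h3, h4⟩ := hEL t htm
        simp only [hfd]
        rw [h2, sub_self, dot_zero_right, h4, dot_zero_left, ← h1, ← h3]
        have : dot (p t) (deriv δq t - δv t) = dot (p t) (deriv δq t) - dot (p t) (δv t) := by
          rw [dot_comm, dot_sub_left, dot_comm (δv t), dot_comm (deriv δq t)]
        rw [this]
        ring
      rw [intervalIntegral.integral_congr heq,
        intervalIntegral.integral_eq_sub_of_hasDerivAt (fun t _ => hψ t)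
          ((((hp.continuous_deriv le_rfl).dot' hδq.continuous).add
            (hp.continuous.dot' (hδq.continuous_deriv le_rfl))).intervalIntegrable t₁ t₂),
        hb1, hb2, dot_zero_right, dot_zero_right, sub_zero]
    rw [hz] at key
    exact key
  · -- stationarity implies EL equations
    intro hvar
    have cq := hq.continuous; have cv := hv.continuous; have cp := hp.continuous
    have cl := hl.continuous
    have cdq := hq.continuous_deriv le_rfl
    have cdp := hp.continuous_deriv le_rfl
    have hxc : Continuous fun t => (q t, v t, l t) := cq.prodMk (cv.prodMk cl)
    -- continuity of the G's along the curve
    have hGq_cont : Continuous fun t => Gq (q t, v t, l t) := by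
      have hrep : (fun t => Gq (q t, v t, l t)) =
          fun t i => (fderiv ℝ 𝔏 (q t, v t, l t)) (Pi.single i 1, 0, 0) := by
        funext t i
        rw [hfd]
        simp [dot_single, dot_zero_right]
      rw [hrep]
      exact continuous_pi fun i =>
        ((h𝔏.continuous_fderiv one_ne_zero).comp hxc).clm_apply continuous_const
    have hGv_cont : Continuous fun t => Gv (q t, v t, l t) := by
      have hrep : (fun t => Gv (q t, v t, l t)) =
          fun t i => (fderiv ℝ 𝔏 (q t, v t, l t)) (0, Pi.single i 1, 0) := by
        funext t i
        rw [hfd]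
        simp [dot_single, dot_zero_right]
      rw [hrep]
      exact continuous_pi fun i =>
        ((h𝔏.continuous_fderiv one_ne_zero).comp hxc).clm_apply continuous_const
    have hGl_cont : Continuous fun t => Gl (q t, v t, l t) := by
      have hrep : (fun t => Gl (q t, v t, l t)) =
          fun t i => (fderiv ℝ 𝔏 (q t, v t, l t)) (0, 0, Pi.single i 1) := by
        funext t i
        rw [hfd]
        simp [dot_single, dot_zero_right]
      rw [hrep]
      exact continuous_pi fun i =>
        ((h𝔏.continuous_fderiv one_ne_zero).comp hxc).clm_apply continuous_const
    -- the first variation vanishes for every admissible variation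
    have hz : ∀ (δq δv δp : ℝ → Fin n → ℝ) (δl : ℝ → Fin m → ℝ),
        ContDiff ℝ 1 δq → ContDiff ℝ 1 δv → ContDiff ℝ 1 δp → ContDiff ℝ 1 δl →
        δq t₁ = 0 → δq t₂ = 0 →
        (∫ t in t₁..t₂,
          ((fderiv ℝ 𝔏 (q t, v t, l t)) (δq t, δv t, δl t) +
            (dot (δp t) (deriv q t - v t) + dot (p t) (deriv δq t - δv t)))) = 0 := by
      intro δq δv δp δl hδq hδv hδp hδl hb1 hb2
      exact (action_hasDerivAt 𝔏 h𝔏 t₁ t₂ q v p l hq hv hp hl δq δv δp δl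
        hδq hδv hδp hδl).unique (hvar δq δv δp δl hδq hδv hδp hδl hb1 hb2)
    intro t htI
    -- equation 2 : deriv q = v
    have e2 : ∀ t ∈ Icc t₁ t₂, deriv q t - v t = 0 := by
      refine flcv ht (cdq.sub cv) ?_
      intro φ hφ hφ1 hφ2
      have h0 := hz (fun _ => 0) (fun _ => 0) φ (fun _ => 0) contDiff_const contDiff_const hφ contDiff_const rfl rfl
      simp only [hfd, Pi.zero_apply, dot_zero_right, deriv_const', zero_add, add_zero,
        sub_zero, sub_self] at h0
      rw [intervalIntegral.integral_congr
        (g := fun t => dot (φ t) (deriv q t - v t)) (fun s _ => dot_comm _ _)]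
      exact h0
    -- equation 4 : Gl = 0
    have e4 : ∀ t ∈ Icc t₁ t₂, Gl (q t, v t, l t) = 0 := by
      refine flcv ht hGl_cont ?_
      intro φ hφ hφ1 hφ2
      have h0 := hz (fun _ => 0) (fun _ => 0) (fun _ => 0) φ contDiff_const contDiff_const contDiff_const hφ rfl rfl
      simp only [hfd, Pi.zero_apply, dot_zero_right, dot_zero_left, deriv_const', zero_add,
        add_zero, sub_zero, sub_self] at h0
      exact h0
    -- equation 1 : p = Gv
    have e1 : ∀ t ∈ Icc t₁ t₂, Gv (q t, v t, l t) - p t = 0 := by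
      refine flcv ht (hGv_cont.sub cp) ?_
      intro φ hφ hφ1 hφ2
      have h0 := hz (fun _ => 0) φ (fun _ => 0) (fun _ => 0) contDiff_const hφ contDiff_const contDiff_const rfl rfl
      simp only [hfd, Pi.zero_apply, dot_zero_right, dot_zero_left, deriv_const', zero_add,
        add_zero, sub_zero, zero_sub, dot_neg_right] at h0
      rw [intervalIntegral.integral_congr
        (g := fun t => dot (Gv (q t, v t, l t)) (φ t) + -dot (p t) (φ t))
        (fun s _ => by rw [dot_sub_left]; ring)]
      exact h0
    -- equation 3 : deriv p = Gq
    have e3 : ∀ t ∈ Icc t₁ t₂, Gq (q t, v t, l t) - deriv p t = 0 := by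
      refine flcv ht (hGq_cont.sub cdp) ?_
      intro φ hφ hφ1 hφ2
      have h0 := hz φ (fun _ => 0) (fun _ => 0) (fun _ => 0) hφ contDiff_const contDiff_const contDiff_const hφ1 hφ2
      simp only [hfd, Pi.zero_apply, dot_zero_right, dot_zero_left, deriv_const', zero_add,
        add_zero, sub_zero] at h0
      -- h0 : ∫ (dot (Gq xt) (φ t) + dot (p t) (deriv φ t)) = 0
      have hψ : ∀ t : ℝ, HasDerivAt (fun t => dot (p t) (φ t))
          (dot (deriv p t) (φ t) + dot (p t) (deriv φ t)) t := fun t =>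
        ((hp.differentiable one_ne_zero t).hasDerivAt).dot ((hφ.differentiable one_ne_zero t).hasDerivAt)
      have hibp : (∫ t in t₁..t₂, (dot (deriv p t) (φ t) + dot (p t) (deriv φ t))) = 0 := by
        rw [intervalIntegral.integral_eq_sub_of_hasDerivAt (fun t _ => hψ t)
          (((cdp.dot' hφ.continuous).add
            (cp.dot' (hφ.continuous_deriv le_rfl))).intervalIntegrable t₁ t₂),
          hφ1, hφ2, dot_zero_right, dot_zero_right, sub_zero]
      have hint1 : IntervalIntegrable
          (fun t => dot (Gq (q t, v t, l t)) (φ t) + dot (p t) (deriv φ t)) volume t₁ t₂ :=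
        ((hGq_cont.dot' hφ.continuous).add
          (cp.dot' (hφ.continuous_deriv le_rfl))).intervalIntegrable t₁ t₂
      have hint2 : IntervalIntegrable
          (fun t => dot (deriv p t) (φ t) + dot (p t) (deriv φ t)) volume t₁ t₂ :=
        ((cdp.dot' hφ.continuous).add
          (cp.dot' (hφ.continuous_deriv le_rfl))).intervalIntegrable t₁ t₂
      have hsub := intervalIntegral.integral_sub hint1 hint2
      rw [h0, hibp, sub_zero] at hsub
      rw [intervalIntegral.integral_congr
        (g := fun t => (dot (Gq (q t, v t, l t)) (φ t) + dot (p t) (deriv φ t)) -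
          (dot (deriv p t) (φ t) + dot (p t) (deriv φ t)))
        (fun s _ => by rw [dot_sub_left]; ring)]
      exact hsub
    refine ⟨?_, ?_, ?_, e4 t htI⟩
    · have := e1 t htI; rw [sub_eq_zero] at this; exact this.symm
    · have := e2 t htI; rwa [sub_eq_zero] at this
    · have := e3 t htI; rw [sub_eq_zero] at this; exact this.symm
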